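/- arXiv:0712.1324 — 2 statements merged into one kernel-verified Lean document; each statement's English description precedes it below -/
import Mathlib

section
/- Let A be a connected DG algebra, and let M, N be minimal semifree left DG A-modules whose semibases consist of elements of degree 0, with standard semifree filtrations 0 ⊆ M(0) ⊆ M(1) ⊆ ··· and 0 ⊆ N(0) ⊆ N(1) ⊆ ···. Then any morphism of DG A-modules f : M → N preserves the filtrations, i.e., f(M(n)) ⊆ N(n) for all n ≥ 0. -/
open scoped TensorProduct

variable (k : Type) [Field k]

/-- A (cochain) differential graded algebra over `k`: a `ℤ`-graded `k`-algebra
together with a degree `1` differential which is a graded derivation. -/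
structure DGA where
  A : Type
  [ringA : Ring A]
  [algA : Algebra k A]
  grading : ℤ → Submodule k A
  [gradedA : GradedAlgebra grading]
  d : A →ₗ[k] A
  d_deg : ∀ (n : ℤ) (a : A), a ∈ grading n → d a ∈ grading (n + 1)
  d_sq : ∀ a : A, d (d a) = 0
  leibniz : ∀ (i : ℤ) (a b : A), a ∈ grading i →
      d (a * b) = d a * b + (Int.negOnePow i : ℤ) • (a * d b)

attribute [instance] DGA.ringA DGA.algA DGA.gradedA

variable {k}

/-- A DG algebra is connected if it is concentrated in non-negative degrees
and its degree `0` part is `k·1`. -/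
def DGA.connected (𝔸 : DGA k) : Prop :=
  (∀ n : ℤ, n < 0 → 𝔸.grading n = ⊥) ∧ 𝔸.grading 0 = Submodule.span k {(1 : 𝔸.A)}

/-- An augmentation of a DG algebra: an algebra map to `k` killing the image of the
differential and all nonzero degrees.  (For a connected DG algebra this is the canonical
projection onto degree `0`.) -/
structure DGA.Aug (𝔸 : DGA k) where
  ε : 𝔸.A →ₐ[k] k
  ε_d : ∀ a, ε (𝔸.d a) = 0
  ε_deg : ∀ n : ℤ, n ≠ 0 → ∀ a ∈ 𝔸.grading n, ε a = 0

/-- A (left) differential graded module over a DG algebra. -/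
structure DGMod (𝔸 : DGA k) where
  M : Type
  [acg : AddCommGroup M]
  [amod : Module 𝔸.A M]
  [kmod : Module k M]
  [tower : IsScalarTower k 𝔸.A M]
  grading : ℤ → Submodule k M
  [decomp : DirectSum.Decomposition grading]
  smul_mem : ∀ (i j : ℤ) (a : 𝔸.A) (m : M), a ∈ 𝔸.grading i → m ∈ grading j →
      a • m ∈ grading (i + j)
  dM : M →ₗ[k] M
  dM_deg : ∀ (n : ℤ) (m : M), m ∈ grading n → dM m ∈ grading (n + 1)
  dM_sq : ∀ m : M, dM (dM m) = 0
  leibniz : ∀ (i : ℤ) (a : 𝔸.A) (m : M), a ∈ 𝔸.grading i →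
      dM (a • m) = 𝔸.d a • m + (Int.negOnePow i : ℤ) • (a • dM m)

attribute [instance] DGMod.acg DGMod.amod DGMod.kmod DGMod.tower DGMod.decomp

/-- The submodule `I(A)·M` where `I(A) = ker ε` is the augmentation ideal. -/
def DGMod.IP {𝔸 : DGA k} (ε : 𝔸.Aug) (P : DGMod 𝔸) : Submodule 𝔸.A P.M :=
  Submodule.span 𝔸.A {x | ∃ (a : 𝔸.A) (m : P.M), ε.ε a = 0 ∧ x = a • m}

/-- A DG module is minimal if `d(M) ⊆ I(A)·M`. -/
def DGMod.Minimal {𝔸 : DGA k} (ε : 𝔸.Aug) (P : DGMod 𝔸) : Prop :=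
  ∀ m : P.M, P.dM m ∈ P.IP ε

/-- A semifree resolution of the trivial DG module `k` over an augmented DG algebra:
a semifree DG module (with a chosen semibasis, witnessing semifreeness) together with a
quasi-isomorphism `εP` onto the trivial module `k` (concentrated in degree `0`,
with `A` acting via the augmentation). -/
structure SFR {𝔸 : DGA k} (ε : 𝔸.Aug) extends DGMod 𝔸 where
  ι : Type
  bas : Module.Basis ι 𝔸.A M
  degB : ι → ℤ
  homog : ∀ i, bas i ∈ grading (degB i)
  lvl : ι → ℕ
  d_lvl : ∀ i, dM (bas i) ∈ Submodule.span 𝔸.A (bas '' {j | lvl j < lvl i})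
  εP : M →ₗ[k] k
  εP_lin : ∀ (a : 𝔸.A) (m : M), εP (a • m) = ε.ε a * εP m
  εP_deg : ∀ n : ℤ, n ≠ 0 → ∀ m ∈ grading n, εP m = 0
  εP_d : ∀ m, εP (dM m) = 0
  qis_surj : ∃ m ∈ grading 0, dM m = 0 ∧ εP m = 1
  qis_ker : ∀ (n : ℤ) (m : M), m ∈ grading n → dM m = 0 → εP m = 0 →
      m ∈ LinearMap.range dM

/-- `Ext^n_A(k,k) = 0`, expressed via a semifree resolution `P` of `k`: every
`A`-semilinear functional `P → k` of cohomological degree `n` which is a cocycle is a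
coboundary in `Hom_A(P,k)`. -/
def ExtVanishAt {𝔸 : DGA k} (ε : 𝔸.Aug) (P : SFR ε) (n : ℤ) : Prop :=
  ∀ f : P.M →ₗ[k] k,
    (∀ (a : 𝔸.A) (m : P.M), f (a • m) = ε.ε a * f m) →
    (∀ i : ℤ, i ≠ -n → ∀ m ∈ P.grading i, f m = 0) →
    (∀ m, f (P.dM m) = 0) →
    ∃ g : P.M →ₗ[k] k,
      (∀ (a : 𝔸.A) (m : P.M), g (a • m) = ε.ε a * g m) ∧
      (∀ i : ℤ, i ≠ -(n - 1) → ∀ m ∈ P.grading i, g m = 0) ∧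
      ∀ m, f m = g (P.dM m)

/-- `Ext^n_A(k,k) = 0` for all `n ≠ 0` (the Koszul property, via Proposition 1.1). -/
def ExtVanish (𝔸 : DGA k) (ε : 𝔸.Aug) : Prop :=
  ∀ P : SFR ε, ∀ n : ℤ, n ≠ 0 → ExtVanishAt ε P n

/-- `Tor^n_A(k,k) = 0` for `n ≠ 0`: for any semifree resolution `P` of `k`, the complex
`k ⊗_A P = P/I(A)P` has vanishing cohomology in nonzero degrees. -/
def TorVanish (𝔸 : DGA k) (ε : 𝔸.Aug) : Prop :=
  ∀ P : SFR ε, ∀ n : ℤ, n ≠ 0 → ∀ m ∈ P.grading n,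
    P.dM m ∈ P.toDGMod.IP ε →
      ∃ y ∈ P.grading (n - 1), m - P.dM y ∈ P.toDGMod.IP ε

/-- `A` is a Koszul DG algebra: the trivial DG module `k` has a minimal semifree
resolution whose semibasis consists of elements of degree `0`. -/
def IsKoszul (𝔸 : DGA k) (ε : 𝔸.Aug) : Prop :=
  ∃ P : SFR ε, P.toDGMod.Minimal ε ∧ ∀ i, P.degB i = 0

/-- A presentation of the cohomology algebra `H(𝔸)` by a DG algebra `𝔹` (with zero
differential): a map defined on cocycles of `𝔸`, multiplicative, additive, grading
preserving, surjective, with kernel exactly the coboundaries. -/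
structure HPres (𝔸 𝔹 : DGA k) where
  φ : 𝔸.A → 𝔹.A
  map_add : ∀ a b, 𝔸.d a = 0 → 𝔸.d b = 0 → φ (a + b) = φ a + φ b
  map_smul : ∀ (c : k) (a), 𝔸.d a = 0 → φ (c • a) = c • φ a
  map_mul : ∀ a b, 𝔸.d a = 0 → 𝔸.d b = 0 → φ (a * b) = φ a * φ b
  map_one : φ 1 = 1
  surj : ∀ n : ℤ, ∀ y ∈ 𝔹.grading n, ∃ a, 𝔸.d a = 0 ∧ a ∈ 𝔸.grading n ∧ φ a = y
  ker : ∀ a, 𝔸.d a = 0 → (φ a = 0 ↔ a ∈ LinearMap.range 𝔸.d)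
  graded : ∀ (n : ℤ) (a), 𝔸.d a = 0 → a ∈ 𝔸.grading n → φ a ∈ 𝔹.grading n

/-- The `k`-span of the semibasis of `P`. -/
def SFR.kE {𝔸 : DGA k} {ε : 𝔸.Aug} (P : SFR ε) : Submodule k P.M :=
  Submodule.span k (Set.range P.bas)

/-- The standard semifree filtration of `P` associated to its semibasis:
`F(0) = A·(kE ∩ ker d)` and `F(n+1) = A·(kE ∩ d⁻¹ F(n))`. -/
def SFR.stdF {𝔸 : DGA k} {ε : 𝔸.Aug} (P : SFR ε) : ℕ → Submodule 𝔸.A P.M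
  | 0 => Submodule.span 𝔸.A ((P.kE ⊓ LinearMap.ker P.dM : Submodule k P.M) : Set P.M)
  | n + 1 => Submodule.span 𝔸.A
      ((P.kE ⊓ Submodule.comap P.dM ((SFR.stdF P n).restrictScalars k) :
        Submodule k P.M) : Set P.M)

/-- The underlying space of the Ext-algebra `E = Ext⁰_A(k,k)` of a Koszul DG algebra,
realized as the `A`-semilinear degree `0` cocycle functionals on a (minimal) semifree
resolution `P` of `k`. -/
def ExtSpace {𝔸 : DGA k} {ε : 𝔸.Aug} (P : SFR ε) : Submodule k (P.M →ₗ[k] k) where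
  carrier := {f | (∀ (a : 𝔸.A) (m : P.M), f (a • m) = ε.ε a * f m) ∧
      (∀ n : ℤ, n ≠ 0 → ∀ m ∈ P.grading n, f m = 0) ∧ ∀ m, f (P.dM m) = 0}
  add_mem' := by
    rintro f g ⟨hf1, hf2, hf3⟩ ⟨hg1, hg2, hg3⟩
    refine ⟨fun a m => ?_, fun n hn m hm => ?_, fun m => ?_⟩
    · simp [hf1, hg1, mul_add]
    · simp [hf2 n hn m hm, hg2 n hn m hm]
    · simp [hf3, hg3]
  zero_mem' := by
    exact ⟨fun a m => by simp, fun n hn m hm => rfl, fun m => rfl⟩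
  smul_mem' := by
    rintro c f ⟨hf1, hf2, hf3⟩
    refine ⟨fun a m => ?_, fun n hn m hm => ?_, fun m => ?_⟩
    · simp [hf1, mul_left_comm]
    · simp [hf2 n hn m hm]
    · simp [hf3]

/-- The unit of the Ext-algebra: the class of the resolution map `εP` itself. -/
def unitE {𝔸 : DGA k} {ε : 𝔸.Aug} (P : SFR ε) : ↥(ExtSpace P) :=
  ⟨P.εP, P.εP_lin, P.εP_deg, P.εP_d⟩

/-- `g : P → P` is a lift (through the resolution `εP : P → k`) of the Ext-class `x`:
an `A`-linear chain map of degree `0` with `εP ∘ g = x`. -/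
def IsLift {𝔸 : DGA k} {ε : 𝔸.Aug} (P : SFR ε) (g : P.M →ₗ[k] P.M)
    (x : ↥(ExtSpace P)) : Prop :=
  (∀ (a : 𝔸.A) (m : P.M), g (a • m) = a • g m) ∧
  (∀ n : ℤ, ∀ m ∈ P.grading n, g m ∈ P.grading n) ∧
  (∀ m, g (P.dM m) = P.dM (g m)) ∧
  (∀ m, (x : P.M →ₗ[k] k) m = P.εP (g m))

/-- `mul` is the Yoneda (composition) product on `E = Ext⁰_A(k,k)`:
`y·x = y ∘ g` for any lift `g` of `x`. -/
def MulCompat {𝔸 : DGA k} {ε : 𝔸.Aug} (P : SFR ε)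
    (mul : ↥(ExtSpace P) → ↥(ExtSpace P) → ↥(ExtSpace P)) : Prop :=
  ∀ (y x : ↥(ExtSpace P)) (g : P.M →ₗ[k] P.M), IsLift P g x →
    ∀ m, (↑(mul y x) : P.M →ₗ[k] k) m = (↑y : P.M →ₗ[k] k) (g m)

/-- `mul` makes `E` an associative unital `k`-algebra with unit `εP`, and is the
Yoneda product. -/
structure ExtMulOk {𝔸 : DGA k} {ε : 𝔸.Aug} (P : SFR ε)
    (mul : ↥(ExtSpace P) → ↥(ExtSpace P) → ↥(ExtSpace P)) : Prop where
  compat : MulCompat P mul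
  add_left : ∀ y₁ y₂ x, mul (y₁ + y₂) x = mul y₁ x + mul y₂ x
  add_right : ∀ y x₁ x₂, mul y (x₁ + x₂) = mul y x₁ + mul y x₂
  smul_left : ∀ (c : k) y x, mul (c • y) x = c • mul y x
  smul_right : ∀ (c : k) y x, mul y (c • x) = c • mul y x
  assoc : ∀ z y x, mul (mul z y) x = mul z (mul y x)
  one_mul : ∀ x, mul (unitE P) x = x
  mul_one : ∀ x, mul x (unitE P) = x

/-- The canonical decreasing filtration on the Ext-algebra: `F₀ = E` and
`F_{n+1} = {x ∈ E | x` vanishes on the standard filtration step `P(n)}`. -/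
noncomputable def Fil {𝔸 : DGA k} {ε : 𝔸.Aug} (P : SFR ε) : ℕ → Submodule k ↥(ExtSpace P)
  | 0 => ⊤
  | n + 1 => ⨅ (m : P.M) (_ : m ∈ P.stdF n),
      LinearMap.ker ((LinearMap.applyₗ m).comp (ExtSpace P).subtype)


theorem Fil_zero {𝔸 : DGA k} {ε : 𝔸.Aug} (P : SFR ε) : Fil P 0 = ⊤ := rfl

attribute [irreducible] ExtSpace Fil

instance {𝔸 : DGA k} {ε : 𝔸.Aug} (P : SFR ε) : AddCommGroup ↥(ExtSpace P) :=
  inferInstance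

instance {𝔸 : DGA k} {ε : 𝔸.Aug} (P : SFR ε) : Module k ↥(ExtSpace P) :=
  inferInstance

noncomputable instance {𝔸 : DGA k} {ε : 𝔸.Aug} (P : SFR ε) (n : ℕ) :
    AddCommGroup ↥(Fil P n) := inferInstance

noncomputable instance {𝔸 : DGA k} {ε : 𝔸.Aug} (P : SFR ε) (n : ℕ) :
    Module k ↥(Fil P n) := inferInstance
lemma kE_le_grading_zero {𝔸 : DGA k} {ε : 𝔸.Aug} (P : SFR ε)
    (hdeg : ∀ i, P.degB i = 0) : P.kE ≤ P.grading 0 := by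
  rw [SFR.kE, Submodule.span_le]
  rintro _ ⟨i, rfl⟩
  have := P.homog i
  rwa [hdeg i] at this

lemma grading_zero_le_kE {𝔸 : DGA k} (hconn : 𝔸.connected) {ε : 𝔸.Aug} (P : SFR ε)
    (hdeg : ∀ i, P.degB i = 0) : P.grading 0 ≤ P.kE := by
  classical
  intro m hm
  let p : P.M →ₗ[k] P.M :=
    (P.grading 0).subtype ∘ₗ
      (DirectSum.component k ℤ (fun i => ↥(P.grading i)) 0) ∘ₗ
      (DirectSum.decomposeLinearEquiv P.grading).toLinearMap
  have hpdef : ∀ x, p x = (DirectSum.decompose P.grading x 0 : P.M) := fun x => rfl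
  have hkey : ∀ (a : 𝔸.A) (i : P.ι), p (a • P.bas i) ∈ P.kE := by
    intro a i
    have hb : P.bas i ∈ P.grading 0 := by
      have := P.homog i; rwa [hdeg i] at this
    have hsum : a • P.bas i =
        ∑ j ∈ (DirectSum.decompose 𝔸.grading a).support,
          (DirectSum.decompose 𝔸.grading a j : 𝔸.A) • P.bas i := by
      rw [← Finset.sum_smul, DirectSum.sum_support_decompose]
    rw [hsum, map_sum]
    refine Submodule.sum_mem _ ?_
    intro j _
    have hmem : (DirectSum.decompose 𝔸.grading a j : 𝔸.A) • P.bas i ∈ P.grading j := by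
      have := P.smul_mem j 0 _ _ (DirectSum.decompose 𝔸.grading a j).2 hb
      simpa using this
    by_cases hj0 : j = 0
    · subst hj0
      rw [hpdef, DirectSum.decompose_of_mem_same P.grading hmem]
      have h0 : (DirectSum.decompose 𝔸.grading a 0 : 𝔸.A) ∈
          Submodule.span k {(1 : 𝔸.A)} := by
        rw [← hconn.2]; exact (DirectSum.decompose 𝔸.grading a 0).2
      obtain ⟨c, hc⟩ := Submodule.mem_span_singleton.mp h0
      rw [← hc, smul_assoc, one_smul]
      exact Submodule.smul_mem _ c (Submodule.subset_span ⟨i, rfl⟩)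
    · rw [hpdef, DirectSum.decompose_of_mem_ne P.grading hmem hj0]
      exact Submodule.zero_mem _
  have hm' : p m = m := by
    rw [hpdef, DirectSum.decompose_of_mem_same P.grading hm]
  have hrep := P.bas.linearCombination_repr m
  rw [Finsupp.linearCombination_apply, Finsupp.sum] at hrep
  rw [← hm', ← hrep, map_sum]
  exact Submodule.sum_mem _ fun i _ => hkey _ i

/-- Let `A` be a connected DG algebra, `M` and `N` minimal semifree
left DG `A`-modules whose semibases consist of elements of degree `0`, equipped with
their standard semifree filtrations.  Then any morphism of DG `A`-modules `f : M → N`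
preserves the standard filtrations: `f(M(n)) ⊆ N(n)` for all `n`. -/
theorem dgmorphism_preserves_standard_filtration (𝔸 : DGA k) (hconn : 𝔸.connected)
    (ε : 𝔸.Aug) (M N : SFR ε)
    (hMmin : M.toDGMod.Minimal ε) (hNmin : N.toDGMod.Minimal ε)
    (hMdeg : ∀ i, M.degB i = 0) (hNdeg : ∀ i, N.degB i = 0)
    (f : M.M →ₗ[k] N.M)
    (hlin : ∀ (a : 𝔸.A) (m : M.M), f (a • m) = a • f m)
    (hgr : ∀ (n : ℤ), ∀ m ∈ M.grading n, f m ∈ N.grading n)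
    (hchain : ∀ m, f (M.dM m) = N.dM (f m)) :
    ∀ (n : ℕ), ∀ m ∈ M.stdF n, f m ∈ N.stdF n := by
  intro n
  induction n with
  | zero =>
    intro m hm
    rw [SFR.stdF] at hm ⊢
    induction hm using Submodule.span_induction with
    | mem x hx =>
      obtain ⟨hx1, hx2⟩ : x ∈ M.kE ∧ x ∈ LinearMap.ker M.dM := hx
      refine Submodule.subset_span ?_
      refine ⟨grading_zero_le_kE hconn N hNdeg
        (hgr 0 x (kE_le_grading_zero M hMdeg hx1)), ?_⟩
      have : N.dM (f x) = f (M.dM x) := (hchain x).symm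
      simp only [SetLike.mem_coe, LinearMap.mem_ker]
      rw [this, LinearMap.mem_ker.mp hx2, map_zero]
    | zero => simp
    | add x y _ _ hx hy => rw [map_add]; exact Submodule.add_mem _ hx hy
    | smul a x _ hx => rw [hlin]; exact Submodule.smul_mem _ a hx
  | succ n ih =>
    intro m hm
    rw [SFR.stdF] at hm ⊢
    induction hm using Submodule.span_induction with
    | mem x hx =>
      obtain ⟨hx1, hx2⟩ : x ∈ M.kE ∧ x ∈ Submodule.comap M.dM
          ((M.stdF n).restrictScalars k) := hx
      refine Submodule.subset_span ?_
      refine ⟨grading_zero_le_kE hconn N hNdeg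
        (hgr 0 x (kE_le_grading_zero M hMdeg hx1)), ?_⟩
      have : N.dM (f x) = f (M.dM x) := (hchain x).symm
      simp only [SetLike.mem_coe, Submodule.mem_comap, Submodule.restrictScalars_mem] at hx2 ⊢
      rw [this]
      exact ih _ hx2
    | zero => simp
    | add x y _ _ hx hy => rw [map_add]; exact Submodule.add_mem _ hx hy
    | smul a x _ hx => rw [hlin]; exact Submodule.smul_mem _ a hx
end

section
/- Let A be a connected DG algebra right AS-Gorenstein with RHom_{A^op}(k,A) ≅ s^l k, and let P → k_A be a minimal semifree resolution of the trivial right module with finite semifree filtration 0 ⊆ P(0) ⊆ ··· ⊆ P(n) = P, P(n)/P(n−1) ≠ 0. Then the top subquotient satisfies P(n)/P(n−1) ≅ A[−l] (a single free module on one generator of degree −l). -/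
open scoped TensorProduct

variable (k : Type) [Field k]

variable {k}

open MulOpposite in
/-- A semifree resolution of the trivial *right* DG module `k` over an augmented DG
algebra `𝔸`: a right DG `𝔸`-module (i.e. a module over `𝔸.Aᵐᵒᵖ`), semifree with a
chosen semibasis, together with a quasi-isomorphism `εP` onto `k`. -/
structure RSFR {𝔸 : DGA k} (ε : 𝔸.Aug) where
  M : Type
  [acg : AddCommGroup M]
  [amod : Module 𝔸.Aᵐᵒᵖ M]
  [kmod : Module k M]
  [tower : IsScalarTower k 𝔸.Aᵐᵒᵖ M]
  grading : ℤ → Submodule k M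
  [decomp : DirectSum.Decomposition grading]
  smul_mem : ∀ (i j : ℤ) (a : 𝔸.A) (m : M), a ∈ 𝔸.grading i → m ∈ grading j →
      op a • m ∈ grading (j + i)
  dM : M →ₗ[k] M
  dM_deg : ∀ (n : ℤ) (m : M), m ∈ grading n → dM m ∈ grading (n + 1)
  dM_sq : ∀ m : M, dM (dM m) = 0
  leibniz : ∀ (i j : ℤ) (a : 𝔸.A) (m : M), a ∈ 𝔸.grading i → m ∈ grading j →
      dM (op a • m) = op a • dM m + (Int.negOnePow j : ℤ) • (op (𝔸.d a) • m)
  ι : Type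
  bas : Module.Basis ι 𝔸.Aᵐᵒᵖ M
  degB : ι → ℤ
  homog : ∀ i, bas i ∈ grading (degB i)
  lvl : ι → ℕ
  d_lvl : ∀ i, dM (bas i) ∈ Submodule.span 𝔸.Aᵐᵒᵖ (bas '' {j | lvl j < lvl i})
  εP : M →ₗ[k] k
  εP_lin : ∀ (a : 𝔸.A) (m : M), εP (op a • m) = ε.ε a * εP m
  εP_deg : ∀ n : ℤ, n ≠ 0 → ∀ m ∈ grading n, εP m = 0
  εP_d : ∀ m, εP (dM m) = 0
  qis_surj : ∃ m ∈ grading 0, dM m = 0 ∧ εP m = 1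
  qis_ker : ∀ (n : ℤ) (m : M), m ∈ grading n → dM m = 0 → εP m = 0 →
      m ∈ LinearMap.range dM

attribute [instance] RSFR.acg RSFR.amod RSFR.kmod RSFR.tower RSFR.decomp

open MulOpposite in
/-- Minimality of a right semifree resolution: `d(P) ⊆ P·I(A)`. -/
def RSFR.RMinimal {𝔸 : DGA k} {ε : 𝔸.Aug} (P : RSFR ε) : Prop :=
  ∀ m : P.M, P.dM m ∈ Submodule.span 𝔸.Aᵐᵒᵖ
    {x : P.M | ∃ (a : 𝔸.A) (m' : P.M), ε.ε a = 0 ∧ x = op a • m'}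

open MulOpposite in
/-- A degree `n` cocycle of the complex `Hom_{A^op}(P, A)` (which computes
`RHom_{A^op}(k, A)`). -/
def RIsCocycleA {𝔸 : DGA k} {ε : 𝔸.Aug} (P : RSFR ε) (n : ℤ)
    (f : P.M →ₗ[k] 𝔸.A) : Prop :=
  (∀ (a : 𝔸.A) (m : P.M), f (op a • m) = f m * a) ∧
  (∀ (i : ℤ), ∀ m ∈ P.grading i, f m ∈ 𝔸.grading (i + n)) ∧
  (∀ m, 𝔸.d (f m) = (Int.negOnePow n : ℤ) • f (P.dM m))

open MulOpposite in
/-- A degree `n` coboundary of the complex `Hom_{A^op}(P, A)`. -/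
def RIsCoboundaryA {𝔸 : DGA k} {ε : 𝔸.Aug} (P : RSFR ε) (n : ℤ)
    (f : P.M →ₗ[k] 𝔸.A) : Prop :=
  ∃ g : P.M →ₗ[k] 𝔸.A,
    (∀ (a : 𝔸.A) (m : P.M), g (op a • m) = g m * a) ∧
    (∀ (i : ℤ), ∀ m ∈ P.grading i, g m ∈ 𝔸.grading (i + (n - 1))) ∧
    ∀ m, f m = 𝔸.d (g m) + (Int.negOnePow (n - 1) : ℤ) • g (P.dM m)

/-- `RHom_{A^op}(k, A) ≅ s^l k`: the cohomology of `Hom_{A^op}(P,A)` vanishes in degrees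
`≠ l` and is one-dimensional in degree `l`, for every semifree resolution `P` of the
trivial right DG module `k`. -/
def RightGorAt {𝔸 : DGA k} (ε : 𝔸.Aug) (l : ℤ) : Prop :=
  ∀ P : RSFR ε,
    (∀ n : ℤ, n ≠ l → ∀ f, RIsCocycleA P n f → RIsCoboundaryA P n f) ∧
    (∃ f₀, RIsCocycleA P l f₀ ∧ ¬ RIsCoboundaryA P l f₀ ∧
      ∀ f, RIsCocycleA P l f → ∃ c : k, RIsCoboundaryA P l (f - c • f₀))

/-! ### Auxiliary development for the proof -/

open MulOpposite DirectSum in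
/-- The `A`-coordinate functional of a semibasis element, as a `k`-linear map to `A`. -/
noncomputable def RSFR.fcoord {𝔸 : DGA k} {ε : 𝔸.Aug} (P : RSFR ε) (t : P.ι) :
    P.M →ₗ[k] 𝔸.A :=
  (MulOpposite.opLinearEquiv k (M := 𝔸.A)).symm.toLinearMap.comp
    ((P.bas.coord t).restrictScalars k)

open MulOpposite in
lemma RSFR.fcoord_apply {𝔸 : DGA k} {ε : 𝔸.Aug} (P : RSFR ε) (t : P.ι) (m : P.M) :
    P.fcoord t m = unop (P.bas.repr m t) := rfl

open MulOpposite in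
lemma RSFR.fcoord_smul {𝔸 : DGA k} {ε : 𝔸.Aug} (P : RSFR ε) (t : P.ι) (a : 𝔸.A)
    (m : P.M) : P.fcoord t (op a • m) = P.fcoord t m * a := by
  rw [P.fcoord_apply, P.fcoord_apply, LinearEquiv.map_smul, Finsupp.smul_apply,
    smul_eq_mul, unop_mul, unop_op]

open MulOpposite in
lemma RSFR.fcoord_basis {𝔸 : DGA k} {ε : 𝔸.Aug} (P : RSFR ε) (t t' : P.ι)
    [Decidable (t' = t)] :
    P.fcoord t (P.bas t') = if t' = t then 1 else 0 := by
  rw [P.fcoord_apply, Module.Basis.repr_self, Finsupp.single_apply]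
  split <;> simp

open MulOpposite in
lemma RSFR.fcoord_op_smul_basis {𝔸 : DGA k} {ε : 𝔸.Aug} (P : RSFR ε) (t t' : P.ι)
    (c : 𝔸.A) [Decidable (t' = t)] :
    P.fcoord t (op c • P.bas t') = if t' = t then c else 0 := by
  classical
  rw [P.fcoord_smul, P.fcoord_basis]
  split <;> simp

open MulOpposite DirectSum in
/-- Coordinates of homogeneous elements are homogeneous. -/
lemma RSFR.fcoord_homog {𝔸 : DGA k} {ε : 𝔸.Aug} (P : RSFR ε) (t : P.ι) (j : ℤ)
    (m : P.M) (hm : m ∈ P.grading j) :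
    P.fcoord t m ∈ 𝔸.grading (j - P.degB t) := by
  classical
  set a : P.ι → 𝔸.A := fun t' => unop (P.bas.repr m t') with ha
  have hrep : m = ∑ t' ∈ (P.bas.repr m).support,
      ∑ p ∈ (decompose 𝔸.grading (a t')).support,
        op ((decompose 𝔸.grading (a t') p : 𝔸.A)) • P.bas t' := by
    conv_lhs => rw [← P.bas.linearCombination_repr m]
    rw [Finsupp.linearCombination_apply, Finsupp.sum]
    refine Finset.sum_congr rfl fun t' _ => ?_
    rw [← Finset.sum_smul, ← Finset.op_sum, sum_support_decompose]
    simp [ha]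
  have hdec : DirectSum.of (fun j' => ↥(P.grading j')) j ⟨m, hm⟩ =
      ∑ t' ∈ (P.bas.repr m).support,
      ∑ p ∈ (decompose 𝔸.grading (a t')).support,
        DirectSum.of (fun j' => ↥(P.grading j')) (P.degB t' + p)
          ⟨op ((decompose 𝔸.grading (a t') p : 𝔸.A)) • P.bas t',
            P.smul_mem p (P.degB t') _ _ (SetLike.coe_mem _) (P.homog t')⟩ := by
    rw [← decompose_of_mem P.grading hm]
    conv_lhs => rw [hrep]
    rw [decompose_sum]
    refine Finset.sum_congr rfl fun t' _ => ?_
    rw [decompose_sum]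
    exact Finset.sum_congr rfl fun p _ =>
      decompose_of_mem _ (P.smul_mem p (P.degB t') _ _ (SetLike.coe_mem _) (P.homog t'))
  have hcomp : ∀ p₀ ∈ (decompose 𝔸.grading (a t)).support, p₀ = j - P.degB t := by
    intro p₀ hp₀
    by_contra hne
    have hts : t ∈ (P.bas.repr m).support := by
      by_contra hts
      rw [Finsupp.notMem_support_iff] at hts
      have h0 : a t = 0 := by simp [ha, hts]
      rw [h0] at hp₀
      simp at hp₀
    set idx : ℤ := P.degB t + p₀ with hidx
    have hj' : j ≠ idx := by omega
    have hx := hdec.symm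
    set Φ : (⨁ j' : ℤ, ↥(P.grading j')) →ₗ[k] 𝔸.A :=
      (P.fcoord t).comp ((P.grading idx).subtype.comp
        (DirectSum.component k ℤ (fun j' => ↥(P.grading j')) idx)) with hΦ
    have hΦof : ∀ (i : ℤ) (b : ↥(P.grading i)),
        Φ (DirectSum.of (fun j' => ↥(P.grading j')) i b)
          = if i = idx then P.fcoord t (b : P.M) else 0 := by
      intro i b
      rw [hΦ]
      simp only [LinearMap.comp_apply, Submodule.subtype_apply]
      rw [← DirectSum.apply_eq_component, DirectSum.coe_of_apply]
      split <;> simp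
    have hx2 := congrArg Φ hx
    simp only [map_sum, hΦof] at hx2
    rw [if_neg hj'] at hx2
    rw [Finset.sum_eq_single_of_mem t hts] at hx2
    · rw [Finset.sum_eq_single_of_mem p₀ hp₀] at hx2
      · rw [if_pos hidx.symm, P.fcoord_op_smul_basis, if_pos rfl] at hx2
        exact DFinsupp.mem_support_iff.mp hp₀ (ZeroMemClass.coe_eq_zero.mp hx2)
      · intro p _ hpp₀
        rw [if_neg (by omega)]
    · intro t' _ htt
      refine Finset.sum_eq_zero fun p _ => ?_
      simp only [P.fcoord_op_smul_basis, if_neg htt, ite_self]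
  rw [P.fcoord_apply]
  have hsum := (sum_support_decompose 𝔸.grading (a t)).symm
  rw [show unop (P.bas.repr m t) = a t from rfl, hsum]
  exact Submodule.sum_mem _ fun p hp => hcomp p hp ▸ SetLike.coe_mem _


open MulOpposite DirectSum in
/-- Induction on elements of a semifree module: it suffices to check a predicate closed
under addition on homogeneous multiples of basis elements. -/
lemma RSFR.gen_induction {𝔸 : DGA k} {ε : 𝔸.Aug} (P : RSFR ε)
    (Q : P.M → Prop) (h0 : Q 0) (hadd : ∀ x y, Q x → Q y → Q (x + y))
    (hgen : ∀ (p : ℤ) (a : 𝔸.A), a ∈ 𝔸.grading p → ∀ t, Q (op a • P.bas t))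
    (m : P.M) : Q m := by
  classical
  have hrep := (P.bas.linearCombination_repr m).symm
  rw [Finsupp.linearCombination_apply, Finsupp.sum] at hrep
  rw [hrep]
  refine Finset.sum_induction _ Q hadd h0 fun t _ => ?_
  have h : P.bas.repr m t • P.bas t =
      ∑ p ∈ (decompose 𝔸.grading (unop (P.bas.repr m t))).support,
        op ((decompose 𝔸.grading (unop (P.bas.repr m t)) p : 𝔸.A)) • P.bas t := by
    rw [← Finset.sum_smul, ← Finset.op_sum, sum_support_decompose, op_unop]
  rw [h]
  exact Finset.sum_induction _ Q hadd h0 fun p _ => hgen p _ (SetLike.coe_mem _) t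

open MulOpposite in
lemma RSFR.fcoord_dM_basis {𝔸 : DGA k} {ε : 𝔸.Aug} (P : RSFR ε) (i t : P.ι)
    (hmax : ∀ t', P.lvl t' ≤ P.lvl i) :
    P.fcoord i (P.dM (P.bas t)) = 0 := by
  have hsub : Submodule.span 𝔸.Aᵐᵒᵖ (P.bas '' {j | P.lvl j < P.lvl t}) ≤
      LinearMap.ker (P.bas.coord i) := by
    rw [Submodule.span_le]
    rintro _ ⟨s, hs, rfl⟩
    have hne : s ≠ i := by
      intro h
      rw [h] at hs
      simp only [Set.mem_setOf_eq] at hs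
      have := hmax t
      omega
    simp only [SetLike.mem_coe, LinearMap.mem_ker, Module.Basis.coord_apply, Module.Basis.repr_self]
    exact Finsupp.single_eq_of_ne hne.symm
  have h0 : P.bas.coord i (P.dM (P.bas t)) = 0 := hsub (P.d_lvl t)
  rw [P.fcoord_apply, ← Module.Basis.coord_apply, h0, unop_zero]

open MulOpposite in
/-- The coordinate functional of a top-level basis element is a cocycle of
cohomological degree `-degB i`. -/
lemma RSFR.fcoord_cocycle {𝔸 : DGA k} {ε : 𝔸.Aug} (P : RSFR ε) (i : P.ι)
    (hmax : ∀ t', P.lvl t' ≤ P.lvl i) :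
    RIsCocycleA P (-P.degB i) (P.fcoord i) := by
  classical
  refine ⟨fun a m => P.fcoord_smul i a m, fun j m hm => ?_, ?_⟩
  · have := P.fcoord_homog i j m hm
    rwa [sub_eq_add_neg] at this
  · refine P.gen_induction
      (fun m => 𝔸.d (P.fcoord i m) = (Int.negOnePow (-P.degB i) : ℤ) • P.fcoord i (P.dM m))
      ?_ ?_ ?_
    · simp
    · intro x y hx hy
      simp only [map_add, hx, hy, smul_add]
    · intro p a hp t
      have hd := P.leibniz p (P.degB t) a (P.bas t) hp (P.homog t)
      rw [P.fcoord_smul, P.fcoord_basis, hd, map_add, P.fcoord_smul,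
        P.fcoord_dM_basis i t hmax, zero_mul, zero_add, map_zsmul, P.fcoord_smul,
        P.fcoord_basis]
      by_cases ht : t = i
      · rw [if_pos ht, one_mul, one_mul, smul_smul]
        have hz : (Int.negOnePow (-P.degB i) : ℤ) * (Int.negOnePow (P.degB t) : ℤ) = 1 := by
          rw [ht, ← Units.val_mul, ← Int.negOnePow_add]
          simp
        rw [hz, one_smul]
      · rw [if_neg ht, zero_mul, zero_mul, map_zero, smul_zero, smul_zero]

open MulOpposite in
lemma RSFR.eps_g_dM {𝔸 : DGA k} {ε : 𝔸.Aug} (P : RSFR ε) (hmin : P.RMinimal)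
    (g : P.M →ₗ[k] 𝔸.A) (hg : ∀ (a : 𝔸.A) (m : P.M), g (op a • m) = g m * a)
    (m : P.M) : ε.ε (g (P.dM m)) = 0 := by
  refine Submodule.span_induction (p := fun x _ => ε.ε (g x) = 0) ?_ ?_ ?_ ?_ (hmin m)
  · rintro x ⟨b, m', hb, rfl⟩
    rw [hg, map_mul, hb, mul_zero]
  · simp
  · intro x y _ _ hx hy
    rw [map_add, map_add, hx, hy, add_zero]
  · intro c x _ hx
    rw [show c • x = op (unop c) • x by simp, hg, map_mul, hx, zero_mul]

open MulOpposite in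
/-- Every coboundary of `Hom_{A^op}(P,A)`, composed with the augmentation, vanishes
(by minimality of `P`). -/
lemma RSFR.eps_coboundary {𝔸 : DGA k} {ε : 𝔸.Aug} (P : RSFR ε) (hmin : P.RMinimal)
    {n : ℤ} {f : P.M →ₗ[k] 𝔸.A} (hf : RIsCoboundaryA P n f) (m : P.M) :
    ε.ε (f m) = 0 := by
  obtain ⟨g, hg1, -, hg3⟩ := hf
  rw [hg3 m, map_add, ε.ε_d, map_zsmul, P.eps_g_dM hmin g hg1 m, smul_zero, add_zero]

open MulOpposite in
lemma RSFR.coboundary_sub_smul {𝔸 : DGA k} {ε : 𝔸.Aug} (P : RSFR ε) {n : ℤ}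
    {f₁ f₂ : P.M →ₗ[k] 𝔸.A} (c : k)
    (h₁ : RIsCoboundaryA P n f₁) (h₂ : RIsCoboundaryA P n f₂) :
    RIsCoboundaryA P n (f₁ - c • f₂) := by
  obtain ⟨g₁, hg₁a, hg₁b, hg₁c⟩ := h₁
  obtain ⟨g₂, hg₂a, hg₂b, hg₂c⟩ := h₂
  refine ⟨g₁ - c • g₂, fun a m => ?_, fun i m hm => ?_, fun m => ?_⟩
  · simp only [LinearMap.sub_apply, LinearMap.smul_apply, hg₁a, hg₂a, sub_mul,
      smul_mul_assoc]
  · exact sub_mem (hg₁b i m hm) (Submodule.smul_mem _ c (hg₂b i m hm))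
  · simp only [LinearMap.sub_apply, LinearMap.smul_apply, hg₁c m, hg₂c m, map_sub,
      map_smul, smul_sub, smul_add]
    rw [smul_comm ((Int.negOnePow (n - 1) : ℤˣ) : ℤ) c]
    abel

/-- Let `A` be a connected DG algebra which is right AS-Gorenstein
with `RHom_{A^op}(k, A) ≅ s^l k`, and let `P → k` be a minimal semifree resolution of
the trivial right DG module `k` with finite semifree filtration
`0 ⊆ P(0) ⊆ ⋯ ⊆ P(N) = P`, `P(N)/P(N-1) ≠ 0` (the filtration encoded by the level
function of the semibasis).  Then the top subquotient `P(N)/P(N-1) ≅ A[-l]` is free of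
rank one on a single generator of degree `-l`. -/
theorem top_layer_of_gorenstein_resolution (𝔸 : DGA k) (hconn : 𝔸.connected)
    (ε : 𝔸.Aug) (l : ℤ) (hGor : RightGorAt ε l)
    (P : RSFR ε) (hmin : P.RMinimal) (N : ℕ)
    (hbd : ∀ i, P.lvl i ≤ N) (htop : ∃ i, P.lvl i = N) :
    (∀ i j, P.lvl i = N → P.lvl j = N → i = j) ∧
    (∀ i, P.lvl i = N → P.degB i = -l) := by
  classical
  have hdeg : ∀ i, P.lvl i = N → P.degB i = -l := by
    intro i hi
    have hmax : ∀ t, P.lvl t ≤ P.lvl i := fun t => by rw [hi]; exact hbd t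
    have hcoc := P.fcoord_cocycle i hmax
    by_contra hne
    have hcob := (hGor P).1 (-P.degB i) (fun h => hne (by omega)) _ hcoc
    have h1 := P.eps_coboundary hmin hcob (P.bas i)
    rw [P.fcoord_basis, if_pos rfl, map_one] at h1
    exact one_ne_zero h1
  refine ⟨?_, hdeg⟩
  intro i j hi hj
  by_contra hij
  have hmaxi : ∀ t, P.lvl t ≤ P.lvl i := fun t => by rw [hi]; exact hbd t
  have hmaxj : ∀ t, P.lvl t ≤ P.lvl j := fun t => by rw [hj]; exact hbd t
  have hli : l = -P.degB i := by have := hdeg i hi; omega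
  have hlj : l = -P.degB j := by have := hdeg j hj; omega
  have hci : RIsCocycleA P l (P.fcoord i) := hli ▸ P.fcoord_cocycle i hmaxi
  have hcj : RIsCocycleA P l (P.fcoord j) := hlj ▸ P.fcoord_cocycle j hmaxj
  obtain ⟨f₀, -, -, hone⟩ := (hGor P).2
  obtain ⟨ci, hcbi⟩ := hone _ hci
  obtain ⟨cj, hcbj⟩ := hone _ hcj
  by_cases hcj0 : cj = 0
  · have hb : RIsCoboundaryA P l (P.fcoord j) := by
      simpa [hcj0] using hcbj
    have h1 := P.eps_coboundary hmin hb (P.bas j)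
    rw [P.fcoord_basis, if_pos rfl, map_one] at h1
    exact one_ne_zero h1
  · have hcomb := P.coboundary_sub_smul (ci / cj) hcbi hcbj
    have heq : (P.fcoord i - ci • f₀) - (ci / cj) • (P.fcoord j - cj • f₀) =
        P.fcoord i - (ci / cj) • P.fcoord j := by
      rw [smul_sub, smul_smul, div_mul_cancel₀ ci hcj0]
      abel
    rw [heq] at hcomb
    have h1 := P.eps_coboundary hmin hcomb (P.bas i)
    rw [LinearMap.sub_apply, LinearMap.smul_apply, P.fcoord_basis, P.fcoord_basis,
      if_pos rfl, if_neg hij, smul_zero, sub_zero, map_one] at h1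
    exact one_ne_zero h1
end
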